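/- The modules V_α(λ_1,κ) and V_α(λ_2,κ) over k[C_q ⋊ C_m] are isomorphic if and only if λ_1 ≡ λ_2 (mod m). -/

import Mathlib

open Polynomial

section Aux

variable {k : Type*} [Field k] {V : Type*} [AddCommGroup V] [Module k V]

lemma aux_aeval_apply (N : Module.End k V) (e : V) (G : k[X]) {n : ℕ} (hn : G.natDegree < n) :
    (aeval N G) e = ∑ i ∈ Finset.range n, G.coeff i • ((N ^ i) e) := by
  rw [aeval_eq_sum_range' hn]
  simp [LinearMap.sum_apply, LinearMap.smul_apply]

lemma aux_poly_eq_zero {κ : ℕ} (N : Module.End k V) (e : V) (b : Module.Basis (Fin κ) k V)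
    (hb : ∀ i : Fin κ, b i = (N ^ (i : ℕ)) e) {r : k[X]} (hdeg : r.degree < (κ : WithBot ℕ))
    (hr : (aeval N r) e = 0) : r = 0 := by
  by_cases h0 : r = 0
  · exact h0
  have hnd : r.natDegree < κ := (natDegree_lt_iff_degree_lt h0).mpr hdeg
  have h1 : ∑ i : Fin κ, r.coeff (i : ℕ) • b i = 0 := by
    calc ∑ i : Fin κ, r.coeff (i : ℕ) • b i
        = ∑ i ∈ Finset.range κ, r.coeff i • ((N ^ i) e) := by
          rw [← Fin.sum_univ_eq_sum_range (fun i => r.coeff i • ((N ^ i) e)) κ]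
          exact Finset.sum_congr rfl fun i _ => by rw [hb i]
      _ = (aeval N r) e := (aux_aeval_apply N e r hnd).symm
      _ = 0 := hr
  have h2 := (Fintype.linearIndependent_iff.mp b.linearIndependent)
    (fun i => r.coeff (i : ℕ)) h1
  ext n
  rcases lt_or_ge n κ with hn | hn
  · simpa using h2 ⟨n, hn⟩
  · simp [coeff_eq_zero_of_degree_lt (lt_of_lt_of_le hdeg (by exact_mod_cast hn))]

lemma aux_pow_kappa {κ q : ℕ} (hκ1 : 1 ≤ κ) (hκq : κ ≤ q) (N : Module.End k V) (e : V)
    (b : Module.Basis (Fin κ) k V) (hb : ∀ i : Fin κ, b i = (N ^ (i : ℕ)) e)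
    (hNq : N ^ q = 0) : (N ^ κ) e = 0 := by
  set c : Fin κ → k := fun i => b.repr ((N ^ κ) e) i with hc
  set g : k[X] := ∑ i : Fin κ, C (c i) * X ^ (i : ℕ) with hgdef
  have hgdeg : g.degree < (κ : WithBot ℕ) := by
    apply lt_of_le_of_lt (degree_sum_le _ _)
    rw [Finset.sup_lt_iff (by exact_mod_cast WithBot.bot_lt_coe κ : (⊥ : WithBot ℕ) < (κ : WithBot ℕ))]
    intro i _
    exact lt_of_le_of_lt (degree_C_mul_X_pow_le _ _) (by exact_mod_cast i.isLt)
  have hterm : ∀ i : Fin κ, (aeval N (C (c i) * X ^ (i : ℕ))) e = c i • b i := by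
    intro i
    rw [map_mul, aeval_C, aeval_X_pow, ← Algebra.smul_def, LinearMap.smul_apply, hb i]
  have hge : (aeval N g) e = (N ^ κ) e := by
    rw [hgdef, map_sum, LinearMap.sum_apply]
    rw [Finset.sum_congr rfl (fun i _ => hterm i)]
    exact b.sum_repr _
  set f : k[X] := X ^ κ - g with hfdef
  have hfm : f.Monic := monic_X_pow_sub hgdeg
  have hfdeg : f.degree = (κ : WithBot ℕ) := by
    rw [hfdef, degree_sub_eq_left_of_degree_lt, degree_X_pow]
    rw [degree_X_pow]; exact hgdeg
  have hfe : (aeval N f) e = 0 := by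
    rw [hfdef, map_sub, LinearMap.sub_apply, map_pow, aeval_X, hge, sub_self]
  have hmod := modByMonic_add_div (X ^ q : k[X]) f
  have hr0 : (X ^ q %ₘ f) = 0 := by
    apply aux_poly_eq_zero N e b hb
    · exact lt_of_lt_of_eq (degree_modByMonic_lt _ hfm) hfdeg
    · have hsub : (X ^ q %ₘ f) = X ^ q - (X ^ q /ₘ f) * f := by
        rw [mul_comm]; exact eq_sub_of_add_eq hmod
      rw [hsub, map_sub, LinearMap.sub_apply, map_pow, aeval_X, hNq, map_mul,
        Module.End.mul_apply, hfe, map_zero, LinearMap.zero_apply, zero_sub, neg_zero]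
  have hXq : X ^ q = f * (X ^ q /ₘ f) := by
    conv_lhs => rw [← hmod]
    rw [hr0, zero_add]
  have hdvd : f ∣ X ^ q := ⟨X ^ q /ₘ f, hXq⟩
  obtain ⟨i, _, hassoc⟩ := (dvd_prime_pow prime_X q).mp hdvd
  have hfeq : f = X ^ i := eq_of_monic_of_associated hfm (monic_X_pow i) hassoc
  have hik : i = κ := by
    have h2 := hfdeg; rw [hfeq, degree_X_pow] at h2; exact_mod_cast h2
  have hg0 : g = 0 := by
    have h3 : X ^ κ - g = X ^ κ := by rw [← hfdef, hfeq, hik]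
    exact sub_eq_self.mp h3
  rw [← hge, hg0, map_zero, LinearMap.zero_apply]

lemma aux_pow_apply {κ q : ℕ} (hκ1 : 1 ≤ κ) (hκq : κ ≤ q) (N : Module.End k V) (e : V)
    (b : Module.Basis (Fin κ) k V) (hb : ∀ i : Fin κ, b i = (N ^ (i : ℕ)) e)
    (hNq : N ^ q = 0) (n : ℕ) :
    (N ^ n) e = if h : n < κ then b ⟨n, h⟩ else 0 := by
  split_ifs with h
  · exact (hb ⟨n, h⟩).symm
  · push_neg at h
    have h2 : N ^ n = N ^ (n - κ) * N ^ κ := by rw [← pow_add, Nat.sub_add_cancel h]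
    rw [h2, Module.End.mul_apply, aux_pow_kappa hκ1 hκq N e b hb hNq, map_zero]

lemma aux_Nq (p h' : ℕ) (hp : p.Prime) [CharP k p] [Nontrivial V]
    (t : Module.End k V) (ht : t ^ (p ^ h') = 1) : (t - 1) ^ (p ^ h') = 0 := by
  have hinj : Function.Injective (algebraMap k (Module.End k V)) := by
    intro a b' hab
    obtain ⟨v, hv⟩ := exists_ne (0 : V)
    have h1 : a • v = b' • v := by
      have h2 := congrArg (fun f : Module.End k V => f v) hab
      simpa [Module.algebraMap_end_apply] using h2
    have h2 : (a - b') • v = 0 := by rw [sub_smul, h1, sub_self]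
    rcases smul_eq_zero.mp h2 with h3 | h3
    · exact sub_eq_zero.mp h3
    · exact absurd h3 hv
  haveI : CharP (Module.End k V) p := charP_of_injective_algebraMap hinj p
  haveI : Fact p.Prime := ⟨hp⟩
  rw [sub_pow_char_pow_of_commute _ _ (Commute.one_right t), ht, one_pow, sub_self]

lemma aux_transfer {V₂ : Type*} [AddCommGroup V₂] [Module k V₂]
    (N₁ : Module.End k V) (e₁ : V) (N₂ : Module.End k V₂) (e₂ : V₂)
    (φ : V ≃ₗ[k] V₂) (hφ : ∀ n : ℕ, φ ((N₁ ^ n) e₁) = (N₂ ^ n) e₂) (G : k[X]) :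
    φ ((aeval N₁ G) e₁) = (aeval N₂ G) e₂ := by
  rw [aux_aeval_apply N₁ e₁ G (Nat.lt_succ_self _), aux_aeval_apply N₂ e₂ G (Nat.lt_succ_self _),
    map_sum]
  exact Finset.sum_congr rfl fun i _ => by rw [map_smul, hφ i]

lemma aux_srel {α : ℕ} (s t : Module.End k V) (hrel : s * t = t ^ α * s) (n : ℕ) :
    s * (t - 1) ^ n = (t ^ α - 1) ^ n * s := by
  induction n with
  | zero => simp
  | succ n ih =>
      have h1 : s * (t - 1) = (t ^ α - 1) * s := by
        rw [mul_sub, mul_one, hrel, sub_mul, one_mul]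
      rw [pow_succ, ← mul_assoc, ih, mul_assoc, h1, pow_succ, mul_assoc]

lemma aux_one_add_sub (t : Module.End k V) : 1 + (t - 1) = t := by abel

end Aux

/-- The data exhibiting a `k`-vector space `V` as the indecomposable
`k[C_q ⋊ C_m]`-module `V_α(λ,κ)`: endomorphisms `t = τ`, `s = σ` satisfying the group
relations, and a basis `(τ−1)^ν e`, `0 ≤ ν ≤ κ−1`, where `e` is a `σ`-eigenvector with
eigenvalue `ζ^λ`. -/
structure VModuleData (k : Type*) [Field k] (q m α κ : ℕ) (ζ : k) (lam : ℕ)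
    (V : Type*) [AddCommGroup V] [Module k V] where
  t : Module.End k V
  s : Module.End k V
  e : V
  b : Module.Basis (Fin κ) k V
  ht : t ^ q = 1
  hs : s ^ m = 1
  hrel : s * t = t ^ α * s
  hb : ∀ i : Fin κ, b i = ((t - 1) ^ (i : ℕ)) e
  he : s e = (ζ ^ lam) • e

/-- The modules `V_α(λ₁,κ)` and `V_α(λ₂,κ)` over `k[C_q ⋊ C_m]` are
isomorphic if and only if `λ₁ ≡ λ₂ (mod m)`. -/
theorem stmt18 {k : Type*} [Field k] [IsAlgClosed k]
    (p h m α κ : ℕ) (hp : p.Prime) [CharP k p]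
    (hm : 0 < m) (hmp : Nat.Coprime m p) (ζ : k) (hζ : IsPrimitiveRoot ζ m)
    (hα1 : 1 ≤ α) (hαp : Nat.Coprime α p) (hαm : α ^ m ≡ 1 [MOD p ^ h])
    (hκ1 : 1 ≤ κ) (hκ : κ ≤ p ^ h)
    (lam₁ lam₂ : ℕ)
    {V₁ : Type*} [AddCommGroup V₁] [Module k V₁]
    {V₂ : Type*} [AddCommGroup V₂] [Module k V₂]
    (D₁ : VModuleData k (p ^ h) m α κ ζ lam₁ V₁)
    (D₂ : VModuleData k (p ^ h) m α κ ζ lam₂ V₂) :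
    (∃ φ : V₁ ≃ₗ[k] V₂,
        (∀ v : V₁, φ (D₁.t v) = D₂.t (φ v)) ∧ (∀ v : V₁, φ (D₁.s v) = D₂.s (φ v))) ↔
      (lam₁ : ZMod m) = (lam₂ : ZMod m) := by
  haveI hV₁ : Nontrivial V₁ := ⟨D₁.b ⟨0, hκ1⟩, 0, D₁.b.ne_zero _⟩
  haveI hV₂ : Nontrivial V₂ := ⟨D₂.b ⟨0, hκ1⟩, 0, D₂.b.ne_zero _⟩
  have hNq₁ : (D₁.t - 1) ^ (p ^ h) = 0 := aux_Nq p h hp D₁.t D₁.ht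
  have hNq₂ : (D₂.t - 1) ^ (p ^ h) = 0 := aux_Nq p h hp D₂.t D₂.ht
  -- the ζ-power equivalence
  have hu := hζ.isUnit_unit hm.ne'
  have hzeq : (ζ ^ lam₁ = ζ ^ lam₂) ↔ (lam₁ : ZMod m) = (lam₂ : ZMod m) := by
    rw [ZMod.natCast_eq_natCast_iff]
    constructor
    · intro hz
      have h1 : (hζ.isUnit hm.ne').unit ^ lam₁ = (hζ.isUnit hm.ne').unit ^ lam₂ := by
        ext
        simpa [Units.val_pow_eq_pow_val, IsUnit.unit_spec] using hz
      rwa [pow_eq_pow_iff_modEq, ← hu.eq_orderOf] at h1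
    · intro hmod
      have h1 : (hζ.isUnit hm.ne').unit ^ lam₁ = (hζ.isUnit hm.ne').unit ^ lam₂ :=
        pow_eq_pow_iff_modEq.mpr (by rw [← hu.eq_orderOf]; exact hmod)
      have h2 := congrArg Units.val h1
      simpa [Units.val_pow_eq_pow_val, IsUnit.unit_spec] using h2
  constructor
  · rintro ⟨φ, hφt, hφs⟩
    set N₂ : Module.End k V₂ := D₂.t - 1 with hN₂def
    set S : Submodule k V₂ := LinearMap.range N₂ with hSdef
    have hφN : ∀ v, φ ((D₁.t - 1) v) = N₂ (φ v) := by
      intro v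
      simp [hN₂def, LinearMap.sub_apply, map_sub, hφt v, Module.End.one_apply]
    have hφNpow : ∀ (n : ℕ) (v : V₁), φ (((D₁.t - 1) ^ n) v) = (N₂ ^ n) (φ v) := by
      intro n
      induction n with
      | zero => simp
      | succ n ih =>
          intro v
          rw [pow_succ', pow_succ', Module.End.mul_apply, Module.End.mul_apply, hφN, ih]
    have hrel₂ : D₂.s * N₂ = (D₂.t ^ α - 1) * D₂.s := by
      rw [hN₂def, mul_sub, mul_one, D₂.hrel, sub_mul, one_mul]
    obtain ⟨G, hG⟩ : (X : k[X]) ∣ ((1 + X) ^ α - 1) := by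
      rw [X_dvd_iff, coeff_zero_eq_eval_zero]
      simp
    have hta : D₂.t ^ α - 1 = N₂ * (aeval N₂ G) := by
      have h1 : aeval N₂ ((1 + X : k[X]) ^ α - 1) = D₂.t ^ α - 1 := by
        rw [map_sub, map_pow, map_add, map_one, aeval_X, hN₂def, aux_one_add_sub]
      rw [← h1, hG, map_mul, aeval_X]
    have hsS : ∀ w ∈ S, D₂.s w ∈ S := by
      rintro w ⟨u, rfl⟩
      have h3 : D₂.s * N₂ = N₂ * ((aeval N₂ G) * D₂.s) := by
        rw [hrel₂, hta, mul_assoc]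
      have h4 := congrArg (fun f : Module.End k V₂ => f u) h3
      simp only [Module.End.mul_apply] at h4
      rw [h4]
      exact ⟨_, rfl⟩
    set v₀ := φ D₁.e with hv₀def
    have hv₀ : v₀ ∉ S := by
      intro hv
      obtain ⟨w, hw⟩ := hv
      have hall : ∀ u : V₂, u ∈ S := by
        intro u
        have hrep : φ (φ.symm u) = ∑ i : Fin κ, (D₁.b.repr (φ.symm u)) i • φ (D₁.b i) := by
          conv_lhs => rw [← D₁.b.sum_repr (φ.symm u)]
          rw [map_sum]
          exact Finset.sum_congr rfl fun i _ => by rw [map_smul]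
        have hu2 : u = ∑ i : Fin κ, (D₁.b.repr (φ.symm u)) i • φ (D₁.b i) := by
          rw [← hrep, φ.apply_symm_apply]
        rw [hu2]
        apply Submodule.sum_mem
        intro i _
        apply Submodule.smul_mem
        have h5 : φ (D₁.b i) = (N₂ ^ (i : ℕ)) v₀ := by
          rw [D₁.hb i, hφNpow, hv₀def]
        rw [h5, ← hw]
        exact ⟨(N₂ ^ (i : ℕ)) w, by
          rw [← Module.End.mul_apply, ← Module.End.mul_apply, ← pow_succ', ← pow_succ]⟩
      have hsurj : Function.Surjective N₂ := by
        intro u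
        exact hall u
      have hsurjq : Function.Surjective ⇑(N₂ ^ (p ^ h)) := by
        intro u
        obtain ⟨x, hx⟩ := hsurj.iterate (p ^ h) u
        exact ⟨x, by rw [Module.End.pow_apply]; exact hx⟩
      obtain ⟨x, hx⟩ := hsurjq (D₂.b ⟨0, hκ1⟩)
      rw [hNq₂] at hx
      simp only [LinearMap.zero_apply] at hx
      exact D₂.b.ne_zero ⟨0, hκ1⟩ hx.symm
    have hsv : D₂.s v₀ = ζ ^ lam₁ • v₀ := by
      rw [hv₀def, ← hφs D₁.e, D₁.he, map_smul]
    have he₂ : D₂.e = D₂.b ⟨0, hκ1⟩ := by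
      rw [D₂.hb ⟨0, hκ1⟩]; simp
    have hcomap : ∀ u : V₂, D₂.s u - ζ ^ lam₂ • u ∈ S := by
      have hB : ∀ i : Fin κ, D₂.s (D₂.b i) - ζ ^ lam₂ • (D₂.b i) ∈ S := by
        intro i
        rcases Nat.eq_zero_or_pos (i : ℕ) with h0 | hpos
        · have hb0 : D₂.b i = D₂.e := by
            rw [D₂.hb i, h0]; simp
          rw [hb0, D₂.he, sub_self]
          exact Submodule.zero_mem S
        · have hbi : D₂.b i ∈ S := by
            rw [D₂.hb i]
            have h6 : (i : ℕ) = ((i : ℕ) - 1) + 1 := (Nat.succ_pred_eq_of_pos hpos).symm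
            rw [h6, pow_succ']
            exact ⟨((D₂.t - 1) ^ ((i : ℕ) - 1)) D₂.e, (Module.End.mul_apply _ _ _).symm⟩
          exact Submodule.sub_mem S (hsS _ hbi) (Submodule.smul_mem S _ hbi)
      intro u
      have hu3 : D₂.s u - ζ ^ lam₂ • u
          = ∑ i : Fin κ, (D₂.b.repr u) i • (D₂.s (D₂.b i) - ζ ^ lam₂ • D₂.b i) := by
        conv_lhs => rw [← D₂.b.sum_repr u]
        rw [map_sum, Finset.smul_sum, ← Finset.sum_sub_distrib]
        exact Finset.sum_congr rfl fun i _ => by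
          rw [map_smul, smul_sub, smul_comm]
      rw [hu3]
      exact Submodule.sum_mem S fun i _ => Submodule.smul_mem S _ (hB i)
    have hz : ζ ^ lam₁ = ζ ^ lam₂ := by
      by_contra hne
      have hne' : ζ ^ lam₁ - ζ ^ lam₂ ≠ 0 := sub_ne_zero.mpr hne
      apply hv₀
      have hkey : (ζ ^ lam₁ - ζ ^ lam₂) • v₀ ∈ S := by
        have h7 := hcomap v₀
        rwa [hsv, ← sub_smul] at h7
      have h8 := Submodule.smul_mem S (ζ ^ lam₁ - ζ ^ lam₂)⁻¹ hkey
      rwa [smul_smul, inv_mul_cancel₀ hne', one_smul] at h8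
    exact hzeq.mp hz
  · intro hlam
    have hz : ζ ^ lam₁ = ζ ^ lam₂ := hzeq.mpr hlam
    have hpow₁ := aux_pow_apply hκ1 hκ (D₁.t - 1) D₁.e D₁.b D₁.hb hNq₁
    have hpow₂ := aux_pow_apply hκ1 hκ (D₂.t - 1) D₂.e D₂.b D₂.hb hNq₂
    set φ := D₁.b.equiv D₂.b (Equiv.refl _) with hφdef
    have hφb : ∀ i, φ (D₁.b i) = D₂.b i := fun i => by
      simp [hφdef, Module.Basis.equiv_apply]
    have hφpow : ∀ n : ℕ, φ (((D₁.t - 1) ^ n) D₁.e) = ((D₂.t - 1) ^ n) D₂.e := by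
      intro n
      rw [hpow₁ n, hpow₂ n]
      split_ifs with hn
      · exact hφb _
      · exact map_zero φ
    refine ⟨φ, ?_, ?_⟩
    · have key : ∀ i : Fin κ,
          (φ.toLinearMap ∘ₗ D₁.t) (D₁.b i) = (D₂.t ∘ₗ φ.toLinearMap) (D₁.b i) := by
        intro i
        simp only [LinearMap.comp_apply, LinearEquiv.coe_coe]
        rw [hφb i, D₁.hb i, D₂.hb i]
        have ht1 : ∀ v : V₁, D₁.t v = (D₁.t - 1) v + v := fun v => by
          rw [LinearMap.sub_apply, Module.End.one_apply, sub_add_cancel]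
        have ht2 : ∀ v : V₂, D₂.t v = (D₂.t - 1) v + v := fun v => by
          rw [LinearMap.sub_apply, Module.End.one_apply, sub_add_cancel]
        rw [ht1, ht2, map_add]
        congr 1
        · rw [← Module.End.mul_apply, ← Module.End.mul_apply, ← pow_succ', ← pow_succ']
          exact hφpow _
        · exact hφpow _
      have heq : φ.toLinearMap ∘ₗ D₁.t = D₂.t ∘ₗ φ.toLinearMap := D₁.b.ext key
      intro v
      exact DFunLike.congr_fun heq v
    · have key : ∀ i : Fin κ,
          (φ.toLinearMap ∘ₗ D₁.s) (D₁.b i) = (D₂.s ∘ₗ φ.toLinearMap) (D₁.b i) := by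
        intro i
        simp only [LinearMap.comp_apply, LinearEquiv.coe_coe]
        rw [hφb i, D₁.hb i, D₂.hb i]
        have hs₁ : D₁.s (((D₁.t - 1) ^ (i : ℕ)) D₁.e)
            = ζ ^ lam₁ • ((D₁.t ^ α - 1) ^ (i : ℕ)) D₁.e := by
          rw [← Module.End.mul_apply, aux_srel D₁.s D₁.t D₁.hrel, Module.End.mul_apply,
            D₁.he, map_smul]
        have hs₂ : D₂.s (((D₂.t - 1) ^ (i : ℕ)) D₂.e)
            = ζ ^ lam₂ • ((D₂.t ^ α - 1) ^ (i : ℕ)) D₂.e := by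
          rw [← Module.End.mul_apply, aux_srel D₂.s D₂.t D₂.hrel, Module.End.mul_apply,
            D₂.he, map_smul]
        rw [hs₁, hs₂, map_smul, hz]
        congr 1
        have haev₁ : aeval (D₁.t - 1) (((1 + X : k[X]) ^ α - 1) ^ (i : ℕ))
            = (D₁.t ^ α - 1) ^ (i : ℕ) := by
          rw [map_pow, map_sub, map_pow, map_add, map_one, aeval_X, aux_one_add_sub]
        have haev₂ : aeval (D₂.t - 1) (((1 + X : k[X]) ^ α - 1) ^ (i : ℕ))
            = (D₂.t ^ α - 1) ^ (i : ℕ) := by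
          rw [map_pow, map_sub, map_pow, map_add, map_one, aeval_X, aux_one_add_sub]
        rw [← haev₁, ← haev₂]
        exact aux_transfer (D₁.t - 1) D₁.e (D₂.t - 1) D₂.e φ hφpow _
      have heq : φ.toLinearMap ∘ₗ D₁.s = D₂.s ∘ₗ φ.toLinearMap := D₁.b.ext key
      intro v
      exact DFunLike.congr_fun heq v
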